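/- Let H be an N×N (N even) real symmetric mirror-symmetric tridiagonal matrix with positive off-diagonals achieving perfect state transfer in time t_0, so that consecutive eigenvalues (ordered increasingly) differ by odd multiples of π/t_0 and eigenvector symmetries alternate. Then the maximal coupling satisfies J_max ≥ (N/4)·(π/t_0). -/
import Mathlib

open Matrix Finset Real

/-- Real symmetric tridiagonal matrix: diagonal `B`, off-diagonal `J`. -/
def triR (N : ℕ) (B J : ℕ → ℝ) : Matrix (Fin N) (Fin N) ℝ :=
  Matrix.of fun i j =>
    if (i : ℕ) = j then B i
    else if (i : ℕ) + 1 = j then J i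
    else if (j : ℕ) + 1 = i then J j
    else 0

/-- The mirror (order-reversing) permutation matrix `S eₙ = e_{N+1-n}`. -/
def mirrorR (N : ℕ) : Matrix (Fin N) (Fin N) ℝ :=
  Matrix.of fun i j => if j = i.rev then 1 else 0

private lemma sum_range_pair (f : ℕ → ℝ) (M : ℕ) :
    ∑ k ∈ Finset.range (M + M), f k = ∑ j ∈ Finset.range M, (f (2*j) + f (2*j+1)) := by
  induction M with
  | zero => simp
  | succ m ih =>
    have h : m + 1 + (m + 1) = (m + m) + 1 + 1 := by ring
    rw [h, Finset.sum_range_succ, Finset.sum_range_succ, ih, Finset.sum_range_succ, two_mul]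
    ring

/-- For an even-size real symmetric, mirror-symmetric, tridiagonal matrix with positive
couplings whose (increasingly ordered) eigenvalues have consecutive gaps equal to odd
multiples of `π/t₀` and whose eigenvector mirror-symmetries alternate (the top
eigenvector being symmetric), the maximal coupling satisfies
`J_max ≥ (N/4)·(π/t₀)`. -/
theorem coupling_lower_bound_of_perfect_state_transfer
    (N : ℕ) (hN : 0 < N) (hEven : Even N) (B J : ℕ → ℝ) (t₀ : ℝ) (ht₀ : 0 < t₀)
    (hBsym : ∀ i, i < N → B i = B (N - 1 - i))
    (hJsym : ∀ i, i + 1 < N → J i = J (N - 2 - i))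
    (hJpos : ∀ i, i + 1 < N → 0 < J i)
    (lam : Fin N → ℝ) (hmono : StrictMono lam)
    (v : Fin N → Fin N → ℝ)
    (heig : ∀ k, (triR N B J).mulVec (v k) = lam k • v k)
    (horth : ∀ j k, (∑ i, v j i * v k i) = if j = k then 1 else 0)
    (hgap : ∀ (k : Fin N) (h : (k : ℕ) + 1 < N),
      ∃ m : ℕ, lam ⟨(k : ℕ) + 1, h⟩ - lam k = (2 * (m : ℝ) + 1) * (Real.pi / t₀))
    (halt : ∀ k : Fin N,
      (mirrorR N).mulVec (v k) = ((-1 : ℝ) ^ (N - 1 - (k : ℕ))) • v k) :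
    ∃ i, i + 1 < N ∧ (N : ℝ) * Real.pi / (4 * t₀) ≤ J i := by
  obtain ⟨M, hM⟩ := hEven
  have hM1 : 1 ≤ M := by omega
  set H := triR N B J with hH
  -- completeness of eigenvectors
  have hcomp : ∀ i j : Fin N, (∑ k, v k i * v k j) = if i = j then 1 else 0 := by
    set V : Matrix (Fin N) (Fin N) ℝ := Matrix.of (fun k i => v k i) with hV
    have h1 : V * Vᵀ = 1 := by
      ext j k
      simpa [hV, Matrix.mul_apply, Matrix.one_apply] using horth j k
    have h2 : Vᵀ * V = 1 := mul_eq_one_comm.mp h1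
    intro i j
    have := congrFun (congrFun h2 i) j
    simpa [hV, Matrix.mul_apply, Matrix.one_apply] using this
  have hnorm : ∀ k : Fin N, (∑ i, v k i * v k i) = 1 := fun k => by simpa using horth k k
  -- mirror action
  have hSv : ∀ (k : Fin N) (i : Fin N), ((mirrorR N).mulVec (v k)) i = v k i.rev := by
    intro k i
    simp [mirrorR, Matrix.mulVec, dotProduct, ite_mul]
  -- parity of signs
  have heps : ∀ k : Fin N, ((-1:ℝ)^(N - 1 - (k:ℕ))) = (-1:ℝ)^((k:ℕ)+1) := by
    intro k
    have hk := k.isLt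
    rcases Nat.even_or_odd (k:ℕ) with he | ho
    · have h1 : Odd (N - 1 - (k:ℕ)) := by
        rw [Nat.odd_iff]; rw [Nat.even_iff] at he; omega
      have h2 : Odd ((k:ℕ)+1) := by
        rw [Nat.odd_iff]; rw [Nat.even_iff] at he; omega
      rw [Odd.neg_one_pow h1, Odd.neg_one_pow h2]
    · have h1 : Even (N - 1 - (k:ℕ)) := by
        rw [Nat.even_iff]; rw [Nat.odd_iff] at ho; omega
      have h2 : Even ((k:ℕ)+1) := by
        rw [Nat.even_iff]; rw [Nat.odd_iff] at ho; omega
      rw [Even.neg_one_pow h1, Even.neg_one_pow h2]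
  -- the trace identity: ∑ εₖ λₖ = ∑ᵢ H i i.rev
  have keyB : ∑ k : Fin N, ((-1:ℝ)^((k:ℕ)+1)) * lam k = ∑ i : Fin N, H i i.rev := by
    have step1 : ∀ k : Fin N, ((-1:ℝ)^((k:ℕ)+1)) * lam k
        = ∑ i : Fin N, (H.mulVec (v k)) i * v k i.rev := by
      intro k
      have hv : ∀ i : Fin N, v k i.rev = ((-1:ℝ)^((k:ℕ)+1)) * v k i := by
        intro i
        rw [← hSv k i, halt k, Pi.smul_apply, smul_eq_mul, heps k]
      have hHv : ∀ i : Fin N, (H.mulVec (v k)) i = lam k * v k i := by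
        intro i; rw [heig k]; simp
      calc ((-1:ℝ)^((k:ℕ)+1)) * lam k
          = ((-1:ℝ)^((k:ℕ)+1)) * lam k * (∑ i, v k i * v k i) := by rw [hnorm k, mul_one]
        _ = ∑ i, (lam k * v k i) * (((-1:ℝ)^((k:ℕ)+1)) * v k i) := by
            rw [Finset.mul_sum]; apply Finset.sum_congr rfl; intros; ring
        _ = ∑ i : Fin N, (H.mulVec (v k)) i * v k i.rev := by
            apply Finset.sum_congr rfl; intro i _; rw [hHv i, hv i]
    calc ∑ k : Fin N, ((-1:ℝ)^((k:ℕ)+1)) * lam k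
        = ∑ k : Fin N, ∑ i : Fin N, (H.mulVec (v k)) i * v k i.rev :=
          Finset.sum_congr rfl (fun k _ => step1 k)
      _ = ∑ i : Fin N, ∑ k : Fin N, (∑ j, H i j * v k j) * v k i.rev := by
          rw [Finset.sum_comm]
          apply Finset.sum_congr rfl; intro i _
          apply Finset.sum_congr rfl; intro k _
          rfl
      _ = ∑ i : Fin N, ∑ j : Fin N, H i j * (∑ k, v k j * v k i.rev) := by
          apply Finset.sum_congr rfl; intro i _
          calc ∑ k : Fin N, (∑ j, H i j * v k j) * v k i.rev
              = ∑ k : Fin N, ∑ j : Fin N, H i j * v k j * v k i.rev := by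
                apply Finset.sum_congr rfl; intro k _; rw [Finset.sum_mul]
            _ = ∑ j : Fin N, ∑ k : Fin N, H i j * v k j * v k i.rev := Finset.sum_comm
            _ = ∑ j : Fin N, H i j * (∑ k, v k j * v k i.rev) := by
                apply Finset.sum_congr rfl; intro j _
                rw [Finset.mul_sum]
                apply Finset.sum_congr rfl; intro k _; ring
      _ = ∑ i : Fin N, ∑ j : Fin N, H i j * (if j = i.rev then 1 else 0) := by
          apply Finset.sum_congr rfl; intro i _
          apply Finset.sum_congr rfl; intro j _
          rw [hcomp j i.rev]
      _ = ∑ i : Fin N, H i i.rev := by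
          apply Finset.sum_congr rfl; intro i _
          simp [mul_ite, Finset.sum_ite_eq']
  -- compute the trace: ∑ᵢ H i i.rev = 2 J (M-1)
  have hterm : ∀ i : Fin N, H i i.rev =
      (if (i:ℕ) = M - 1 then J (M-1) else 0) + (if (i:ℕ) = M then J (M-1) else 0) := by
    intro i
    have hi := i.isLt
    have hrev : (i.rev : ℕ) = N - 1 - (i:ℕ) := by rw [Fin.val_rev]; omega
    simp only [hH, triR, Matrix.of_apply, hrev]
    split_ifs with h1 h2 h3 h4 h5 h6 h7 h8 h9 h10 h11 h12 <;>
      first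
      | omega
      | (exfalso; omega)
      | (rw [show (N - 1 - (i:ℕ)) = M - 1 by omega]; ring)
      | (rw [show ((i:ℕ)) = M - 1 by omega]; ring)
      | ring
  have htrace : ∑ i : Fin N, H i i.rev = 2 * J (M-1) := by
    rw [Finset.sum_congr rfl (fun i _ => hterm i), Finset.sum_add_distrib]
    have hind : ∀ (c : ℕ), c < N → (∑ i : Fin N, (if (i:ℕ) = c then J (M-1) else 0)) = J (M-1) := by
      intro c hc
      rw [Finset.sum_eq_single (⟨c, hc⟩ : Fin N)]
      · simp
      · intro b _ hb; exact if_neg (by simpa [Fin.ext_iff] using hb)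
      · simp
    rw [hind (M-1) (by omega), hind M (by omega)]
    ring
  -- gaps
  have hgap' : ∀ (j : ℕ) (hj : 2*j+1 < N), Real.pi / t₀ ≤
      lam ⟨2*j+1, hj⟩ - lam ⟨2*j, by omega⟩ := by
    intro j hj
    obtain ⟨m, hm⟩ := hgap ⟨2*j, by omega⟩ hj
    have hpt : 0 < Real.pi / t₀ := div_pos Real.pi_pos ht₀
    have h1 : (1:ℝ) ≤ 2 * (m:ℝ) + 1 := by
      have : (0:ℝ) ≤ (m:ℝ) := Nat.cast_nonneg m
      linarith
    calc Real.pi / t₀ = 1 * (Real.pi / t₀) := (one_mul _).symm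
      _ ≤ (2 * (m:ℝ) + 1) * (Real.pi / t₀) := by
          apply mul_le_mul_of_nonneg_right h1 (le_of_lt hpt)
      _ = lam ⟨2*j+1, hj⟩ - lam ⟨2*j, by omega⟩ := hm.symm
  -- alternating sum lower bound
  set g : ℕ → ℝ := fun k => if h : k < N then ((-1:ℝ)^(k+1)) * lam ⟨k, h⟩ else 0 with hg
  have hsum_eq : ∑ k : Fin N, ((-1:ℝ)^((k:ℕ)+1)) * lam k = ∑ k ∈ Finset.range N, g k := by
    have hpt : ∀ k : Fin N, ((-1:ℝ)^((k:ℕ)+1)) * lam k = g (k:ℕ) := by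
      intro k
      simp only [hg, dif_pos k.isLt, Fin.eta]
    rw [Finset.sum_congr rfl (fun k _ => hpt k), Fin.sum_univ_eq_sum_range g N]
  have hlow : (M:ℝ) * (Real.pi / t₀) ≤ ∑ k ∈ Finset.range N, g k := by
    rw [show N = M + M from hM, sum_range_pair g M]
    have hterm2 : ∀ j ∈ Finset.range M, Real.pi / t₀ ≤ g (2*j) + g (2*j+1) := by
      intro j hj
      rw [Finset.mem_range] at hj
      have hj1 : 2*j+1 < N := by omega
      have hj0 : 2*j < N := by omega
      have e0 : g (2*j) = - lam ⟨2*j, hj0⟩ := by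
        rw [hg]; simp only [dif_pos hj0]
        rw [Odd.neg_one_pow ⟨j, by ring⟩]; ring
      have e1 : g (2*j+1) = lam ⟨2*j+1, hj1⟩ := by
        rw [hg]; simp only [dif_pos hj1]
        rw [Even.neg_one_pow ⟨j+1, by ring⟩]; ring
      rw [e0, e1]
      have := hgap' j hj1
      linarith
    calc (M:ℝ) * (Real.pi / t₀) = ∑ _j ∈ Finset.range M, Real.pi / t₀ := by
          rw [Finset.sum_const, Finset.card_range, nsmul_eq_mul]
      _ ≤ ∑ j ∈ Finset.range M, (g (2*j) + g (2*j+1)) := Finset.sum_le_sum hterm2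
  -- conclude
  refine ⟨M - 1, by omega, ?_⟩
  have hfin : (M:ℝ) * (Real.pi / t₀) ≤ 2 * J (M-1) := by
    rw [← htrace, ← keyB, hsum_eq] at *
    exact hlow
  have hNc : (N:ℝ) = (M:ℝ) + (M:ℝ) := by rw [hM]; push_cast; ring
  rw [hNc]
  rw [div_le_iff₀ (by positivity)]
  have hfin2 : (M:ℝ) * Real.pi ≤ 2 * J (M-1) * t₀ := by
    have h := mul_le_mul_of_nonneg_right hfin (le_of_lt ht₀)
    have ht : t₀ ≠ 0 := ne_of_gt ht₀
    field_simp at h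
    linarith
  linarith
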